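/- Let τ be a constructive translation from low-level variables V_L to high-level variables V_H, and let x_L, x_H be partial settings of X_L ⊆ V_L and X_H ⊆ V_H respectively. Then τ(x_L) = x_H if and only if: (1) for each X ∈ X_H, τ_X maps the set θ_X of low-level cell-valuations agreeing with x_L on X_L ∩ Π_X onto exactly {π_X(x_H)}; and (2) for each high-level variable V ∉ X_H, τ_V maps θ_V onto all of Val(V). -/

import Mathlib

open scoped Classical

/-- An intervention: a partial assignment of values to variables. -/
def Itv (V : Type*) (Val : V → Type*) := ∀ v, Option (Val v)

/-- A potential outcome `Y_x`: an outcome variable together with an intervention. -/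
structure PO (V : Type*) (Val : V → Type*) where
  Y : V
  x : Itv V Val

/-- A Rubin causal model (with a probability distribution on its units). -/
structure RCM (U : Type*) (V : Type*) (Val : V → Type*) where
  O : Set (PO V Val)
  F : (o : PO V Val) → U → Val o.Y
  P : U → ℝ
  P_nonneg : ∀ u, 0 ≤ P u
  P_sum : ∑ᶠ u, P u = 1

/-- Joint valuations ("counterfactuals") of a set of potential outcomes. -/
def CFVal {V : Type*} {Val : V → Type*} (O : Set (PO V Val)) :=
  (o : O) → Val o.1.Y

/-- The (pushforward) counterfactual distribution of an RCM, computed on a set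
of potential outcomes. -/
noncomputable def RCM.cfOn {U V : Type*} {Val : V → Type*} (R : RCM U V Val)
    (O : Set (PO V Val)) (g : CFVal O) : ℝ :=
  ∑ᶠ u, if ∀ o : O, R.F o.1 u = g o then R.P u else 0

/-- The counterfactual distribution of an RCM on its own defined outcomes. -/
noncomputable def RCM.cf {U V : Type*} {Val : V → Type*} (R : RCM U V Val)
    (g : CFVal R.O) : ℝ := R.cfOn R.O g

/-- Effectiveness: intervened variables take their intervened values. -/
def RCM.Effective {U V : Type*} {Val : V → Type*} (R : RCM U V Val) : Prop :=
  ∀ o, o ∈ R.O → ∀ u, ∀ y : Val o.Y, o.x o.Y = some y → R.F o u = y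

/-- Update an intervention at one variable. -/
noncomputable def upd {V : Type*} {Val : V → Type*} (x : Itv V Val) (Y : V) (y : Val Y) :
    Itv V Val :=
  fun v => if h : v = Y then some (cast (congrArg Val h.symm) y) else x v

/-- Composition, at every unit, whenever the relevant outcomes are defined. -/
def RCM.Composition {U V : Type*} {Val : V → Type*} (R : RCM U V Val) : Prop :=
  ∀ (u : U) (Y Z : V) (w : Itv V Val),
    (⟨Y, w⟩ : PO V Val) ∈ R.O → (⟨Z, w⟩ : PO V Val) ∈ R.O →
    (⟨Z, upd w Y (R.F ⟨Y, w⟩ u)⟩ : PO V Val) ∈ R.O →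
    R.F ⟨Z, upd w Y (R.F ⟨Y, w⟩ u)⟩ u = R.F ⟨Z, w⟩ u

/-- Reversibility, at every unit, whenever the relevant outcomes are defined. -/
def RCM.Reversibility {U V : Type*} {Val : V → Type*} (R : RCM U V Val) : Prop :=
  ∀ (u : U) (Y Z : V) (w : Itv V Val) (y : Val Y) (z : Val Z), Y ≠ Z →
    (⟨Y, upd w Z z⟩ : PO V Val) ∈ R.O → (⟨Z, upd w Y y⟩ : PO V Val) ∈ R.O →
    (⟨Y, w⟩ : PO V Val) ∈ R.O →
    R.F ⟨Y, upd w Z z⟩ u = y → R.F ⟨Z, upd w Y y⟩ u = z →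
    R.F ⟨Y, w⟩ u = y

/-- A structural causal model. -/
structure SCM (Uex : Type*) (V : Type*) (Val : V → Type*) where
  Pa : V → Set V
  Pa_irr : ∀ v, v ∉ Pa v
  f : (v : V) → ((w : V) → Val w) → Uex → Val v
  f_dep : ∀ v a b u, (∀ w ∈ Pa v, a w = b w) → f v a u = f v b u
  P : Uex → ℝ
  P_nonneg : ∀ u, 0 ≤ P u
  P_sum : ∑ᶠ u, P u = 1

/-- `s` solves the manipulated model `M_x` under exogenous setting `u`. -/
def SCM.IsSol {Uex V : Type*} {Val : V → Type*} (M : SCM Uex V Val)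
    (x : Itv V Val) (u : Uex) (s : ∀ w, Val w) : Prop :=
  ∀ w, s w = (x w).getD (M.f w s u)

/-- `M` has a unique solution under every intervention and exogenous setting. -/
def SCM.Uniq {Uex V : Type*} {Val : V → Type*} (M : SCM Uex V Val) : Prop :=
  ∀ (x : Itv V Val) (u : Uex), ∃! s, M.IsSol x u s

/-- The potential outcome `Y_x(u)` of an SCM with unique solutions. -/
noncomputable def SCM.po {Uex V : Type*} {Val : V → Type*} (M : SCM Uex V Val)
    (h : M.Uniq) (o : PO V Val) (u : Uex) : Val o.Y :=
  (h o.x u).exists.choose o.Y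

/-- The counterfactual distribution of an SCM on a set of potential outcomes. -/
noncomputable def SCM.cf {Uex V : Type*} {Val : V → Type*} (M : SCM Uex V Val)
    (h : M.Uniq) (O : Set (PO V Val)) (g : CFVal O) : ℝ :=
  ∑ᶠ u, if ∀ o : O, M.po h o.1 u = g o then M.P u else 0

/-- `M` represents `R`: the counterfactual distribution of `M` marginalizes to
that of `R` on the outcomes defined by `R`. -/
def Represents {Uex U V : Type*} {Val : V → Type*} (M : SCM Uex V Val) (h : M.Uniq)
    (R : RCM U V Val) : Prop :=
  ∀ g : CFVal R.O, M.cf h R.O g = R.cf g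

/-- `R` is representable by some SCM with unique solutions. -/
def RCM.Representable {U V : Type*} {Val : V → Type*} (R : RCM U V Val) : Prop :=
  ∃ (Uex : Type) (M : SCM Uex V Val) (h : M.Uniq), Finite Uex ∧ Represents M h R

/-- `R'` extends `R`. -/
def RCM.Extends {U V : Type*} {Val : V → Type*} (R' R : RCM U V Val) : Prop :=
  R.O ⊆ R'.O ∧ (∀ o ∈ R.O, R'.F o = R.F o) ∧ R'.P = R.P

/-- A full RCM defines every potential outcome. -/
def RCM.Full {U V : Type*} {Val : V → Type*} (R : RCM U V Val) : Prop :=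
  R.O = Set.univ

/-- `R'` is a submodel of `R`. -/
def Submodel {U V : Type*} {Val : V → Type*} (R' R : RCM U V Val) : Prop :=
  R'.O ⊆ R.O ∧ (∀ o ∈ R'.O, R'.F o = R.F o) ∧ R'.P = R.P

/-- A constructive translation from low-level variables `VL` to high-level
variables `VH`: a partition of (part of) `VL` into cells, one nonempty cell per
high-level variable, with a surjective value-map for each cell. -/
structure CTrans (VL : Type*) (ValL : VL → Type*) (VH : Type*) (ValH : VH → Type*) where
  cell : VL → Option VH
  cell_ne : ∀ Vh : VH, ∃ w, cell w = some Vh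
  tau : (Vh : VH) → ((w : {w : VL // cell w = some Vh}) → ValL w.1) → ValH Vh
  tau_surj : ∀ Vh, Function.Surjective (tau Vh)

/-- The translation of total low-level valuations. -/
def CTrans.tot {VL VH : Type*} {ValL : VL → Type*} {ValH : VH → Type*}
    (T : CTrans VL ValL VH ValH) (g : ∀ v, ValL v) : ∀ Vh, ValH Vh :=
  fun Vh => T.tau Vh (fun w => g w.1)

/-- The total valuations extending a partial valuation. -/
def extVals {V : Type*} {Val : V → Type*} (x : Itv V Val) : Set (∀ v, Val v) :=
  {g | ∀ v, ∀ c, x v = some c → g v = c}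

/-- Canonical extension of a translation to partial valuations:
`τ(x_L) = x_H` iff the `τ`-image of the extensions of `x_L` is the set of
extensions of `x_H`. -/
def CTrans.PartTrans {VL VH : Type*} {ValL : VL → Type*} {ValH : VH → Type*}
    (T : CTrans VL ValL VH ValH) (xL : Itv VL ValL) (xH : Itv VH ValH) : Prop :=
  T.tot '' extVals xL = extVals xH

/-- The valuations of the cell of `Vh` that agree with `x_L` on the part of
its domain lying in that cell. -/
def CTrans.theta {VL VH : Type*} {ValL : VL → Type*} {ValH : VH → Type*}
    (T : CTrans VL ValL VH ValH) (xL : Itv VL ValL) (Vh : VH) :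
    Set ((w : {w : VL // T.cell w = some Vh}) → ValL w.1) :=
  {p | ∀ (w : {w : VL // T.cell w = some Vh}) (c : ValL w.1), xL w.1 = some c → p w = c}

/-- The interventions appearing in a set of potential outcomes. -/
def Intervs {V : Type*} {Val : V → Type*} (O : Set (PO V Val)) : Set (Itv V Val) :=
  {x | ∃ Y, (⟨Y, x⟩ : PO V Val) ∈ O}

/-- The partial valuation recording the outcomes a counterfactual assigns
under a fixed intervention. -/
noncomputable def ypart {V : Type*} {Val : V → Type*} (O : Set (PO V Val))
    (g : CFVal O) (x : Itv V Val) : Itv V Val :=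
  fun Y => if h : (⟨Y, x⟩ : PO V Val) ∈ O then some (g ⟨⟨Y, x⟩, h⟩) else none

/-- Counterfactual translation induced by a constructive translation. -/
def CTrans.CFTrans {VL VH : Type*} {ValL : VL → Type*} {ValH : VH → Type*}
    (T : CTrans VL ValL VH ValH) (OL : Set (PO VL ValL)) (OH : Set (PO VH ValH))
    (gL : CFVal OL) (gH : CFVal OH) : Prop :=
  (∀ xL ∈ Intervs OL, ∃ xH ∈ Intervs OH, T.PartTrans xL xH) ∧
  (∀ xH ∈ Intervs OH, ∃ xL ∈ Intervs OL, T.PartTrans xL xH) ∧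
  (∀ xL ∈ Intervs OL, ∀ xH ∈ Intervs OH, T.PartTrans xL xH →
    T.PartTrans (ypart OL gL xL) (ypart OH gH xH))

/-- `H ≺_τ L`: the counterfactual distribution of `H` is the pushforward of
that of `L` under the counterfactual translation induced by `T`. -/
def Abstraction {UH UL VH VL : Type*} {ValH : VH → Type*} {ValL : VL → Type*}
    (T : CTrans VL ValL VH ValH) (H : RCM UH VH ValH) (L : RCM UL VL ValL) : Prop :=
  ∀ gH : CFVal H.O,
    H.cf gH = ∑ᶠ gL : CFVal L.O,
      if T.CFTrans L.O H.O gL gH then L.cf gL else 0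

section Stmt7Aux

variable {VL VH : Type} {ValL : VL → Type} {ValH : VH → Type} [∀ v, Nonempty (ValL v)]
variable (T : CTrans VL ValL VH ValH) (xL : Itv VL ValL)

/-- Glue cell-valuations into a total low-level valuation. -/
noncomputable def glue
    (p : ∀ Vh, (w : {w : VL // T.cell w = some Vh}) → ValL w.1) (v : VL) : ValL v :=
  match hc : T.cell v with
  | some Vh => p Vh ⟨v, hc⟩
  | none => (xL v).getD (Classical.arbitrary _)

lemma glue_cell (p : ∀ Vh, (w : {w : VL // T.cell w = some Vh}) → ValL w.1)
    {v : VL} {Vh : VH} (hc : T.cell v = some Vh) :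
    glue T xL p v = p Vh ⟨v, hc⟩ := by
  unfold glue
  split
  · rename_i Vh' hc'
    have hV : Vh' = Vh := by rw [hc] at hc'; exact (Option.some.inj hc'.symm)
    subst hV
    rfl
  · rename_i hc'
    rw [hc] at hc'; exact absurd hc' (by simp)

lemma glue_nocell (p : ∀ Vh, (w : {w : VL // T.cell w = some Vh}) → ValL w.1)
    {v : VL} (hc : T.cell v = none) :
    glue T xL p v = (xL v).getD (Classical.arbitrary _) := by
  unfold glue
  split
  · rename_i Vh' hc'
    rw [hc] at hc'; exact absurd hc' (by simp)
  · rfl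

lemma glue_mem (p : ∀ Vh, (w : {w : VL // T.cell w = some Vh}) → ValL w.1)
    (hp : ∀ Vh, p Vh ∈ T.theta xL Vh) : glue T xL p ∈ extVals xL := by
  intro v c hvc
  cases hc : T.cell v with
  | some Vh => rw [glue_cell T xL p hc]; exact hp Vh ⟨v, hc⟩ c hvc
  | none => rw [glue_nocell T xL p hc, hvc]; rfl

lemma theta_nonempty (Vh : VH) : (T.theta xL Vh).Nonempty :=
  ⟨fun w => (xL w.1).getD (Classical.arbitrary _),
    fun w c h => by simp only [h]; rfl⟩

lemma tot_image_eq :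
    T.tot '' extVals xL = {h | ∀ Vh, h Vh ∈ T.tau Vh '' T.theta xL Vh} := by
  ext h
  constructor
  · rintro ⟨g, hg, rfl⟩ Vh
    exact ⟨fun w => g w.1, fun w c hw => hg w.1 c hw, rfl⟩
  · intro hh
    choose p hmem heq using hh
    refine ⟨glue T xL p, glue_mem T xL p hmem, funext fun Vh => ?_⟩
    have : (fun w : {w : VL // T.cell w = some Vh} => glue T xL p w.1) = p Vh := by
      funext w
      exact glue_cell T xL p w.2
    show T.tau Vh _ = h Vh
    rw [this]
    exact heq Vh

end Stmt7Aux

/-- Decomposition of constructive partial translations: `τ(x_L) = x_H` iff each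
intervened high-level variable's cell-map sends the compatible cell-valuations
onto exactly its intervened value, and each non-intervened high-level
variable's cell-map sends them onto its whole range. -/
theorem stmt7 {VL VH : Type} {ValL : VL → Type} {ValH : VH → Type}
    [∀ v, Nonempty (ValL v)]
    (T : CTrans VL ValL VH ValH) (xL : Itv VL ValL) (xH : Itv VH ValH) :
    T.PartTrans xL xH ↔
      ((∀ (Vh : VH) (c : ValH Vh), xH Vh = some c →
          T.tau Vh '' T.theta xL Vh = {c}) ∧
        (∀ Vh : VH, xH Vh = none → T.tau Vh '' T.theta xL Vh = Set.univ)) := by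
  classical
  have hne : ∀ Vh, (T.tau Vh '' T.theta xL Vh).Nonempty :=
    fun Vh => (theta_nonempty T xL Vh).image _
  rw [CTrans.PartTrans, tot_image_eq]
  constructor
  · intro E
    have h1 : ∀ (Vh : VH) (c : ValH Vh), xH Vh = some c →
        T.tau Vh '' T.theta xL Vh = {c} := by
      intro Vh c hx
      have hsub : T.tau Vh '' T.theta xL Vh ⊆ {c} := by
        intro a ha
        set h0 : ∀ V, ValH V := fun V => (hne V).some with hh0
        have hmem : Function.update h0 Vh a ∈
            {h : ∀ V, ValH V | ∀ V, h V ∈ T.tau V '' T.theta xL V} := by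
          intro V
          by_cases hV : V = Vh
          · subst hV; rw [Function.update_self]; exact ha
          · rw [Function.update_of_ne hV]; exact (hne V).some_mem
        rw [E] at hmem
        have := hmem Vh c hx
        rw [Function.update_self] at this
        exact this
      obtain ⟨a, ha⟩ := hne Vh
      have : a = c := hsub ha
      subst this
      exact Set.Subset.antisymm hsub (by intro b hb; rwa [Set.mem_singleton_iff.mp hb])
    refine ⟨h1, ?_⟩
    intro Vh hx
    ext b
    simp only [Set.mem_univ, iff_true]
    set h0 : ∀ V, ValH V := fun V => (hne V).some with hh0
    have hmem : Function.update h0 Vh b ∈ extVals xH := by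
      intro V c hc
      have hV : V ≠ Vh := by rintro rfl; rw [hx] at hc; cases hc
      rw [Function.update_of_ne hV]
      have : h0 V ∈ T.tau V '' T.theta xL V := (hne V).some_mem
      rw [h1 V c hc] at this
      exact this
    rw [← E] at hmem
    have := hmem Vh
    rwa [Function.update_self] at this
  · rintro ⟨h1, h2⟩
    ext h
    constructor
    · intro hh V c hc
      have := hh V
      rw [h1 V c hc] at this
      exact this
    · intro hh V
      cases hx : xH V with
      | some c =>
        rw [h1 V c hx, Set.mem_singleton_iff]
        exact hh V c hx
      | none =>
        rw [h2 V hx]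
        trivial
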